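/- There exists a tree automaton A and a pair of downward-equivalent states p, q (D(p) = D(q)) and upward-equivalent target components such that saturation with S(≡^dw at source, ≡^up(R) at targets) changes the language: concretely, S(≡^dw, ≡^up(R)) is not good for saturation for any parameter relation R. -/

import Mathlib

/-- Trees over an alphabet: a node label and a list of children. -/
inductive TTree (Sym : Type) : Type where
  | node : Sym → List (TTree Sym) → TTree Sym

/-- A top-down tree automaton: transitions and initial states. -/
structure TDTA (Q Sym : Type) where
  delta : Set (Q × Sym × List Q)
  init : Set Q

/-- `Accepts δ q t`: there is a run of the transition relation `δ` on the
closed tree `t` rooted at state `q` (leaf rules are transitions with empty target list). -/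
inductive Accepts {Q Sym : Type} (δ : Set (Q × Sym × List Q)) : Q → TTree Sym → Prop where
  | node {q : Q} {a : Sym} {qs : List Q} {ts : List (TTree Sym)}
      (hmem : (q, a, qs) ∈ δ) (hlen : qs.length = ts.length)
      (hchild : ∀ i : Fin qs.length, Accepts δ (qs.get i) (ts.get (Fin.cast hlen i))) :
      Accepts δ q (TTree.node a ts)

/-- The downward language of a state. -/
def Dlang {Q Sym : Type} (δ : Set (Q × Sym × List Q)) (q : Q) : Set (TTree Sym) :=
  {t | Accepts δ q t}

/-- The language of a tree automaton. -/
def Lang {Q Sym : Type} (A : TDTA Q Sym) : Set (TTree Sym) :=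
  {t | ∃ q ∈ A.init, Accepts A.delta q t}

/-- The `S`-saturated automaton: add every potential transition `t'` for which
some existing transition `t ∈ δ` satisfies `t' S t`. -/
def satAut {Q Sym : Type} (A : TDTA Q Sym)
    (S : Q × Sym × List Q → Q × Sym × List Q → Prop) : TDTA Q Sym :=
  ⟨{t' | ∃ t ∈ A.delta, S t' t}, A.init⟩

/-- The pruned automaton: keep only the transitions that are maximal w.r.t. `P`. -/
def pruneAut {Q Sym : Type} (A : TDTA Q Sym)
    (P : Q × Sym × List Q → Q × Sym × List Q → Prop) : TDTA Q Sym :=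
  ⟨{t | t ∈ A.delta ∧ ∀ t' ∈ A.delta, ¬ P t t'}, A.init⟩

/-- The quotient automaton by an equivalence (setoid) on states. -/
def quotAut {Q Sym : Type} (A : TDTA Q Sym) (s : Setoid Q) : TDTA (Quotient s) Sym :=
  ⟨{t | ∃ r ∈ A.delta, t = (Quotient.mk s r.1, r.2.1, r.2.2.map (Quotient.mk s))},
   {x | ∃ q ∈ A.init, x = Quotient.mk s q}⟩

/-- `Srel Rs Rt` compares two transitions over the same symbol:
sources by `Rs`, target tuples componentwise by `Rt`. -/
def Srel {Q Sym : Type} (Rs Rt : Q → Q → Prop) :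
    Q × Sym × List Q → Q × Sym × List Q → Prop :=
  fun t' t => t'.2.1 = t.2.1 ∧ Rs t'.1 t.1 ∧ List.Forall₂ Rt t'.2.2 t.2.2

/-- Runs with open leaves: trees over `Sym ⊕ Q`, where a leaf labelled by a state
`q` (a "hole") is read exactly at state `q`.  `AcceptsH δ q t` means there is such
a (partial) run of `δ` on `t` rooted at `q`. -/
inductive AcceptsH {Q Sym : Type} (δ : Set (Q × Sym × List Q)) :
    Q → TTree (Sym ⊕ Q) → Prop where
  | hole (q : Q) : AcceptsH δ q (TTree.node (Sum.inr q) [])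
  | node {q : Q} {a : Sym} {qs : List Q} {ts : List (TTree (Sym ⊕ Q))}
      (hmem : (q, a, qs) ∈ δ) (hlen : qs.length = ts.length)
      (hchild : ∀ i : Fin qs.length, AcceptsH δ (qs.get i) (ts.get (Fin.cast hlen i))) :
      AcceptsH δ q (TTree.node (Sum.inl a) ts)

/-- One-hole contexts over `Sym ⊕ Q`. -/
inductive Ctx (Q Sym : Type) : Type where
  | hole : Ctx Q Sym
  | node : Sym → List (TTree (Sym ⊕ Q)) → Ctx Q Sym → List (TTree (Sym ⊕ Q)) → Ctx Q Sym

/-- Filling the hole of a context with a tree. -/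
def fill {Q Sym : Type} : Ctx Q Sym → TTree (Sym ⊕ Q) → TTree (Sym ⊕ Q)
  | Ctx.hole, t => t
  | Ctx.node a l C r, t => TTree.node (Sum.inl a) (l ++ fill C t :: r)

/-- A state leaf. -/
def leafQ {Q Sym : Type} (q : Q) : TTree (Sym ⊕ Q) := TTree.node (Sum.inr q) []

/-- `TreeRel R` relates two trees with identical symbol structure whose state
leaves are componentwise related by `R`. -/
inductive TreeRel {Q Sym : Type} (R : Q → Q → Prop) :
    TTree (Sym ⊕ Q) → TTree (Sym ⊕ Q) → Prop where
  | leaf {p q : Q} : R p q →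
      TreeRel R (TTree.node (Sum.inr p) []) (TTree.node (Sum.inr q) [])
  | node {a : Sym} {ts ts' : List (TTree (Sym ⊕ Q))} (hlen : ts.length = ts'.length)
      (h : ∀ i : Fin ts.length, TreeRel R (ts.get i) (ts'.get (Fin.cast hlen i))) :
      TreeRel R (TTree.node (Sum.inl a) ts) (TTree.node (Sum.inl a) ts')

/-- `CtxRel R` relates two contexts with identical symbol structure whose side
branches are `TreeRel R`-related. -/
inductive CtxRel {Q Sym : Type} (R : Q → Q → Prop) : Ctx Q Sym → Ctx Q Sym → Prop where
  | hole : CtxRel R Ctx.hole Ctx.hole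
  | node {a : Sym} {l r l' r' : List (TTree (Sym ⊕ Q))} {C C' : Ctx Q Sym}
      (hl : List.Forall₂ (TreeRel R) l l') (hC : CtxRel R C C')
      (hr : List.Forall₂ (TreeRel R) r r') :
      CtxRel R (Ctx.node a l C r) (Ctx.node a l' C' r')

/-- A tree (with open state leaves) is accepted by the automaton. -/
def AccLangH {Q Sym : Type} (A : TDTA Q Sym) (t : TTree (Sym ⊕ Q)) : Prop :=
  ∃ i ∈ A.init, AcceptsH A.delta i t

/-- Upward trace inclusion parameterized by a relation `R` on side-branch states:
every accepting run placing `p` at the hole of a context can be replaced by an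
accepting run placing `q` at the hole of an `R`-related context. -/
def upLe {Q Sym : Type} (A : TDTA Q Sym) (R : Q → Q → Prop) (p q : Q) : Prop :=
  ∀ C : Ctx Q Sym, AccLangH A (fill C (leafQ p)) →
    ∃ C' : Ctx Q Sym, CtxRel R C C' ∧ AccLangH A (fill C' (leafQ q))

/-- Upward trace equivalence parameterized by `R`. -/
def upEq {Q Sym : Type} (A : TDTA Q Sym) (R : Q → Q → Prop) (p q : Q) : Prop :=
  upLe A R p q ∧ upLe A R q p

/-- Upward trace inclusion parameterized by identity: every accepting run using
`p` at an open leaf can be replaced by one using `q` there, agreeing with the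
original run on all other (open) leaves. -/
def upLeId {Q Sym : Type} (A : TDTA Q Sym) (p q : Q) : Prop :=
  ∀ C : Ctx Q Sym, AccLangH A (fill C (leafQ p)) → AccLangH A (fill C (leafQ q))

namespace Cex

inductive St : Type | i | q1 | q2 | p | q
deriving DecidableEq

inductive Sy : Type | a | b
deriving DecidableEq

open St Sy

def δ0 : Set (St × Sy × List St) :=
  {(i, a, [q1]), (q1, a, [q2]), (q2, b, []), (p, a, [q]), (i, a, [q]), (q, b, [])}

def A0 : TDTA St Sy := ⟨δ0, {i}⟩

lemma mem_δ0 {s : St} {sy : Sy} {qs : List St} : (s, sy, qs) ∈ δ0 ↔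
    (s = i ∧ sy = a ∧ qs = [q1]) ∨ (s = q1 ∧ sy = a ∧ qs = [q2]) ∨
    (s = q2 ∧ sy = b ∧ qs = []) ∨ (s = p ∧ sy = a ∧ qs = [q]) ∨
    (s = i ∧ sy = a ∧ qs = [q]) ∨ (s = q ∧ sy = b ∧ qs = []) := by
  simp [δ0, Set.mem_insert_iff, Prod.ext_iff]

lemma arity {s : St} {sy : Sy} {qs : List St} (h : (s, sy, qs) ∈ δ0) :
    qs.length ≤ 1 := by
  rcases mem_δ0.1 h with ⟨_,_,rfl⟩|⟨_,_,rfl⟩|⟨_,_,rfl⟩|⟨_,_,rfl⟩|⟨_,_,rfl⟩|⟨_,_,rfl⟩ <;> simp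

lemma side_nil {X : Type} {l r : List X} {x : X} (h : (l ++ x :: r).length ≤ 1) :
    l = [] ∧ r = [] := by
  rcases l with _|⟨y,l⟩ <;> rcases r with _|⟨z,r⟩ <;> simp_all

/-- In any accepting run on a filled context, every node has at most one child,
so all side branches are empty and the context is `CtxRel`-related to itself. -/
lemma ctxrel_refl (R : St → St → Prop) :
    ∀ (C : Ctx St Sy) (s : St) (t : TTree (Sy ⊕ St)),
      AcceptsH δ0 s (fill C t) → CtxRel R C C := by
  intro C
  induction C with
  | hole => intro s t _; exact CtxRel.hole
  | node a0 l C0 r ih =>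
    intro s t h
    simp only [fill] at h
    cases h with
    | node hmem hlen hchild =>
      have hle := arity hmem
      rw [hlen] at hle
      obtain ⟨hl, hr⟩ := side_nil hle
      subst hl; subst hr
      have h0 := hchild ⟨0, by rw [hlen]; simp⟩
      exact CtxRel.node List.Forall₂.nil (ih _ _ h0) List.Forall₂.nil

lemma upEq_refl (R : St → St → Prop) (s : St) : upEq A0 R s s := by
  constructor <;>
    exact fun C hC => ⟨C, ctxrel_refl R C _ _ hC.choose_spec.2, hC⟩

/-- Classification of accepting contexts around `q1` and `q`. -/
lemma up_ctx (s : St) (hs : s = q1 ∨ s = q) (C : Ctx St Sy)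
    (h : AccLangH A0 (fill C (leafQ s))) : C = Ctx.node Sy.a [] Ctx.hole [] := by
  obtain ⟨i0, hi0, hacc⟩ := h
  have hii : i0 = i := hi0
  subst hii
  cases C with
  | hole =>
    cases hacc with
    | hole => rcases hs with hs|hs <;> exact St.noConfusion hs
  | node a0 l C0 r =>
    simp only [fill] at hacc
    cases hacc with
    | node hmem hlen hchild =>
      rcases mem_δ0.1 hmem with ⟨h1,rfl,rfl⟩|⟨h1,_,_⟩|⟨h1,_,_⟩|⟨h1,_,_⟩|⟨h1,rfl,rfl⟩|⟨h1,_,_⟩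
      · -- (i, a, [q1])
        have hle := arity hmem
        rw [hlen] at hle
        obtain ⟨rfl, rfl⟩ := side_nil hle
        have h0 := hchild ⟨0, by simp⟩
        simp only [List.get] at h0
        cases C0 with
        | hole =>
          cases h0 with
          | hole => rfl
        | node a1 l1 C1 r1 =>
          simp only [fill] at h0
          cases h0 with
          | node hmem2 hlen2 hchild2 =>
            rcases mem_δ0.1 hmem2 with ⟨h2,_,_⟩|⟨h2,rfl,rfl⟩|⟨h2,_,_⟩|⟨h2,_,_⟩|⟨h2,_,_⟩|⟨h2,_,_⟩
              <;> try exact St.noConfusion h2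
            have hle2 := arity hmem2
            rw [hlen2] at hle2
            obtain ⟨rfl, rfl⟩ := side_nil hle2
            have h1' := hchild2 ⟨0, by simp⟩
            simp only [List.get] at h1'
            cases C1 with
            | hole =>
              cases h1' with
              | hole => rcases hs with hs|hs <;> exact St.noConfusion hs
            | node a2 l2 C2 r2 =>
              simp only [fill] at h1'
              cases h1' with
              | node hmem3 hlen3 hchild3 =>
                rcases mem_δ0.1 hmem3 with ⟨h3,_,_⟩|⟨h3,_,_⟩|⟨h3,h3b,rfl⟩|⟨h3,_,_⟩|⟨h3,_,_⟩|⟨h3,_,_⟩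
                  <;> try exact St.noConfusion h3
                simp at hlen3
      · exact St.noConfusion h1
      · exact St.noConfusion h1
      · exact St.noConfusion h1
      · -- (i, a, [q])
        have hle := arity hmem
        rw [hlen] at hle
        obtain ⟨rfl, rfl⟩ := side_nil hle
        have h0 := hchild ⟨0, by simp⟩
        simp only [List.get] at h0
        cases C0 with
        | hole =>
          cases h0 with
          | hole => rfl
        | node a1 l1 C1 r1 =>
          simp only [fill] at h0
          cases h0 with
          | node hmem2 hlen2 hchild2 =>
            rcases mem_δ0.1 hmem2 with ⟨h2,_,_⟩|⟨h2,_,_⟩|⟨h2,_,_⟩|⟨h2,_,_⟩|⟨h2,_,_⟩|⟨h2,h2b,rfl⟩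
              <;> try exact St.noConfusion h2
            simp at hlen2
      · exact St.noConfusion h1

lemma accLang_one (s : St) (hmem : (St.i, Sy.a, [s]) ∈ δ0) :
    AccLangH A0 (fill (Ctx.node Sy.a [] Ctx.hole []) (leafQ s)) := by
  refine ⟨St.i, rfl, ?_⟩
  simp only [fill]
  refine AcceptsH.node hmem rfl (fun j => ?_)
  rcases j with ⟨_|n, hj⟩
  · exact AcceptsH.hole s
  · simp at hj

lemma upEq_q1_q (R : St → St → Prop) : upEq A0 R St.q1 St.q := by
  constructor
  · intro C hC
    have hc := up_ctx St.q1 (Or.inl rfl) C hC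
    subst hc
    exact ⟨_, CtxRel.node List.Forall₂.nil CtxRel.hole List.Forall₂.nil,
      accLang_one St.q (by rw [mem_δ0]; tauto)⟩
  · intro C hC
    have hc := up_ctx St.q (Or.inr rfl) C hC
    subst hc
    exact ⟨_, CtxRel.node List.Forall₂.nil CtxRel.hole List.Forall₂.nil,
      accLang_one St.q1 (by rw [mem_δ0]; tauto)⟩

def bLeaf : TTree Sy := TTree.node Sy.b []

lemma acc_b {δ : Set (St × Sy × List St)} (u : St) (hu : (u, Sy.b, ([] : List St)) ∈ δ) :
    Accepts δ u bLeaf :=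
  Accepts.node hu rfl (fun j => Fin.elim0 j)

lemma acc_step {δ : Set (St × Sy × List St)} (u v : St) (hu : (u, Sy.a, [v]) ∈ δ)
    {t : TTree Sy} (h : Accepts δ v t) : Accepts δ u (TTree.node Sy.a [t]) := by
  refine Accepts.node hu rfl (fun j => ?_)
  rcases j with ⟨_|n, hj⟩
  · exact h
  · simp at hj

lemma dlang_q1_p : Dlang A0.delta St.q1 = Dlang A0.delta St.p := by
  have hchar : ∀ (u v : St), (u, Sy.a, [v]) ∈ δ0 → (v, Sy.b, ([] : List St)) ∈ δ0 →
      (∀ sy qs, (u, sy, qs) ∈ δ0 → sy = Sy.a ∧ qs = [v]) →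
      (∀ sy qs, (v, sy, qs) ∈ δ0 → sy = Sy.b ∧ qs = []) →
      Dlang A0.delta u = {TTree.node Sy.a [bLeaf]} := by
    intro u v huv hv hu1 hv1
    ext t
    simp only [Dlang, Set.mem_setOf_eq, Set.mem_singleton_iff]
    constructor
    · intro h
      cases h with
      | node hmem hlen hchild =>
        obtain ⟨rfl, rfl⟩ := hu1 _ _ hmem
        obtain ⟨t0, rfl⟩ := List.length_eq_one_iff.mp hlen.symm
        have h0 := hchild ⟨0, by simp⟩
        simp only [List.get] at h0
        cases h0 with
        | node hmem2 hlen2 hchild2 =>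
          obtain ⟨rfl, rfl⟩ := hv1 _ _ hmem2
          rename_i ts2
          have hts : ts2 = [] := List.eq_nil_of_length_eq_zero (by simpa using hlen2.symm)
          subst hts
          rfl
    · rintro rfl
      exact acc_step u v huv (acc_b v hv)
  have h1 := hchar St.q1 St.q2 (by rw [mem_δ0]; tauto) (by rw [mem_δ0]; tauto)
    (by intro sy qs h; rcases mem_δ0.1 h with ⟨h',_,_⟩|⟨h',rfl,rfl⟩|⟨h',_,_⟩|⟨h',_,_⟩|⟨h',_,_⟩|⟨h',_,_⟩
        <;> first | exact ⟨rfl, rfl⟩ | exact St.noConfusion h')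
    (by intro sy qs h; rcases mem_δ0.1 h with ⟨h',_,_⟩|⟨h',_,_⟩|⟨h',rfl,rfl⟩|⟨h',_,_⟩|⟨h',_,_⟩|⟨h',_,_⟩
        <;> first | exact ⟨rfl, rfl⟩ | exact St.noConfusion h')
  have h2 := hchar St.p St.q (by rw [mem_δ0]; tauto) (by rw [mem_δ0]; tauto)
    (by intro sy qs h; rcases mem_δ0.1 h with ⟨h',_,_⟩|⟨h',_,_⟩|⟨h',_,_⟩|⟨h',rfl,rfl⟩|⟨h',_,_⟩|⟨h',_,_⟩
        <;> first | exact ⟨rfl, rfl⟩ | exact St.noConfusion h')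
    (by intro sy qs h; rcases mem_δ0.1 h with ⟨h',_,_⟩|⟨h',_,_⟩|⟨h',_,_⟩|⟨h',_,_⟩|⟨h',_,_⟩|⟨h',rfl,rfl⟩
        <;> first | exact ⟨rfl, rfl⟩ | exact St.noConfusion h')
  rw [h1, h2]

def w3 : TTree Sy :=
  TTree.node Sy.a [TTree.node Sy.a [TTree.node Sy.a [bLeaf]]]

lemma no_a_after (u : St) (hu : u = St.q2 ∨ u = St.q) (ts : List (TTree Sy)) :
    ¬ Accepts δ0 u (TTree.node Sy.a ts) := by
  intro h
  cases h with
  | node hmem hlen hchild =>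
    rcases hu with rfl | rfl <;>
      rcases mem_δ0.1 hmem with ⟨h',h'',_⟩|⟨h',h'',_⟩|⟨h',h'',_⟩|⟨h',h'',_⟩|⟨h',h'',_⟩|⟨h',h'',_⟩
      <;> first | exact St.noConfusion h' | exact Sy.noConfusion h''

lemma not_w3 : ¬ Accepts δ0 St.i w3 := by
  intro h
  cases h with
  | node hmem hlen hchild =>
    rcases mem_δ0.1 hmem with ⟨_,_,rfl⟩|⟨h',_,_⟩|⟨h',_,_⟩|⟨h',_,_⟩|⟨_,_,rfl⟩|⟨h',_,_⟩
      <;> try exact St.noConfusion h'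
    · -- child q1
      have h0 := hchild ⟨0, by simp⟩
      simp only [List.get] at h0
      cases h0 with
      | node hmem2 hlen2 hchild2 =>
        rcases mem_δ0.1 hmem2 with ⟨h',_,_⟩|⟨_,_,rfl⟩|⟨h',_,_⟩|⟨h',_,_⟩|⟨h',_,_⟩|⟨h',_,_⟩
          <;> try exact St.noConfusion h'
        have h1 := hchild2 ⟨0, by simp⟩
        simp only [List.get] at h1
        exact no_a_after St.q2 (Or.inl rfl) _ h1
    · -- child q
      have h0 := hchild ⟨0, by simp⟩
      simp only [List.get] at h0
      exact no_a_after St.q (Or.inr rfl) _ h0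

end Cex

/-- `S(≡dw, ≡up(R))` is not GFS for any parameter relation `R`:
there is an automaton on which this saturation changes the language, for
every `R`. -/
theorem stmt11 :
    ∃ (Q Sym : Type) (A : TDTA Q Sym), ∀ R : Q → Q → Prop,
      Lang (satAut A
        (Srel (fun p q => Dlang A.delta p = Dlang A.delta q)
              (fun p q => upEq A R p q))) ≠ Lang A := by
  refine ⟨Cex.St, Cex.Sy, Cex.A0, fun R heq => ?_⟩
  set S := Srel (fun p q => Dlang Cex.A0.delta p = Dlang Cex.A0.delta q)
    (fun p q => upEq Cex.A0 R p q) with hS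
  have hT1 : (Cex.St.i, Cex.Sy.a, [Cex.St.q1]) ∈ (satAut Cex.A0 S).delta :=
    ⟨(Cex.St.i, Cex.Sy.a, [Cex.St.q1]), by rw [show Cex.A0.delta = Cex.δ0 from rfl, Cex.mem_δ0]; tauto,
      rfl, rfl, List.Forall₂.cons (Cex.upEq_refl R Cex.St.q1) List.Forall₂.nil⟩
  have hT2 : (Cex.St.q1, Cex.Sy.a, [Cex.St.q1]) ∈ (satAut Cex.A0 S).delta :=
    ⟨(Cex.St.p, Cex.Sy.a, [Cex.St.q]), by rw [show Cex.A0.delta = Cex.δ0 from rfl, Cex.mem_δ0]; tauto,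
      rfl, Cex.dlang_q1_p, List.Forall₂.cons (Cex.upEq_q1_q R) List.Forall₂.nil⟩
  have hT3 : (Cex.St.q1, Cex.Sy.a, [Cex.St.q2]) ∈ (satAut Cex.A0 S).delta :=
    ⟨(Cex.St.q1, Cex.Sy.a, [Cex.St.q2]), by rw [show Cex.A0.delta = Cex.δ0 from rfl, Cex.mem_δ0]; tauto,
      rfl, rfl, List.Forall₂.cons (Cex.upEq_refl R Cex.St.q2) List.Forall₂.nil⟩
  have hT4 : (Cex.St.q2, Cex.Sy.b, ([] : List Cex.St)) ∈ (satAut Cex.A0 S).delta :=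
    ⟨(Cex.St.q2, Cex.Sy.b, []), by rw [show Cex.A0.delta = Cex.δ0 from rfl, Cex.mem_δ0]; tauto,
      rfl, rfl, List.Forall₂.nil⟩
  have hacc : Accepts (satAut Cex.A0 S).delta Cex.St.i Cex.w3 :=
    Cex.acc_step _ _ hT1 (Cex.acc_step _ _ hT2 (Cex.acc_step _ _ hT3 (Cex.acc_b _ hT4)))
  have hmem : Cex.w3 ∈ Lang (satAut Cex.A0 S) := ⟨Cex.St.i, rfl, hacc⟩
  rw [heq] at hmem
  obtain ⟨q0, hq0, hacc0⟩ := hmem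
  have hq : q0 = Cex.St.i := hq0
  subst hq
  exact Cex.not_w3 hacc0
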